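/- The Adler–Yamilov map R_{α,β}((x₁,x₂),(y₁,y₂)) = ((y₁ − (α−β)x₁/(1+x₁y₂), y₂), (x₁, x₂ + (α−β)y₂/(1+x₁y₂))) satisfies the parametric Yang–Baxter equation R²³R¹³R¹² = R¹²R¹³R²³ (wherever defined). -/

import Mathlib

/-- The Adler–Yamilov parametric map on ℂ² × ℂ². -/
noncomputable def AY (α β : ℂ) (p : (ℂ × ℂ) × (ℂ × ℂ)) : (ℂ × ℂ) × (ℂ × ℂ) :=
  ((p.2.1 - (α - β) * p.1.1 / (1 + p.1.1 * p.2.2), p.2.2),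
   (p.1.1, p.1.2 + (α - β) * p.2.2 / (1 + p.1.1 * p.2.2)))

/-- Action on factors 1,2 of a triple. -/
noncomputable def ayR12 (α β : ℂ) (t : (ℂ × ℂ) × (ℂ × ℂ) × (ℂ × ℂ)) : (ℂ × ℂ) × (ℂ × ℂ) × (ℂ × ℂ) :=
  ((AY α β (t.1, t.2.1)).1, (AY α β (t.1, t.2.1)).2, t.2.2)

/-- Action on factors 1,3. -/
noncomputable def ayR13 (α γ : ℂ) (t : (ℂ × ℂ) × (ℂ × ℂ) × (ℂ × ℂ)) : (ℂ × ℂ) × (ℂ × ℂ) × (ℂ × ℂ) :=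
  ((AY α γ (t.1, t.2.2)).1, t.2.1, (AY α γ (t.1, t.2.2)).2)

/-- Action on factors 2,3. -/
noncomputable def ayR23 (β γ : ℂ) (t : (ℂ × ℂ) × (ℂ × ℂ) × (ℂ × ℂ)) : (ℂ × ℂ) × (ℂ × ℂ) × (ℂ × ℂ) :=
  (t.1, (AY β γ (t.2.1, t.2.2)).1, (AY β γ (t.2.1, t.2.2)).2)

theorem stmt_12 (α β γ : ℂ) (t : (ℂ × ℂ) × (ℂ × ℂ) × (ℂ × ℂ))
    (hL1 : 1 + t.1.1 * t.2.1.2 ≠ 0)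
    (hL2 : 1 + (ayR12 α β t).1.1 * (ayR12 α β t).2.2.2 ≠ 0)
    (hL3 : 1 + (ayR13 α γ (ayR12 α β t)).2.1.1 * (ayR13 α γ (ayR12 α β t)).2.2.2 ≠ 0)
    (hR1 : 1 + t.2.1.1 * t.2.2.2 ≠ 0)
    (hR2 : 1 + (ayR23 β γ t).1.1 * (ayR23 β γ t).2.2.2 ≠ 0)
    (hR3 : 1 + (ayR13 α γ (ayR23 β γ t)).1.1 * (ayR13 α γ (ayR23 β γ t)).2.1.2 ≠ 0) :
    ayR23 β γ (ayR13 α γ (ayR12 α β t)) = ayR12 α β (ayR13 α γ (ayR23 β γ t)) := by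
  obtain ⟨⟨x1, x2⟩, ⟨y1, y2⟩, ⟨z1, z2⟩⟩ := t
  simp only [ayR12, ayR13, ayR23, AY] at *
  have hA := mul_ne_zero hL1 hL2
  field_simp at hA
  have hB := mul_ne_zero hR1 hR2
  field_simp at hB
  have hC := mul_ne_zero hA hL3
  field_simp at hC
  have hD := mul_ne_zero hB hR3
  field_simp at hD
  simp only [Prod.mk.injEq]
  and_intros <;> first | trivial | rfl | grind
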